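/- In a normed space X with dim X ≥ 3, for every nonzero x ∈ X there exist infinitely many pairwise non-parallel nonzero vectors y with y ⊥ x (Birkhoff–James). -/

import Mathlib

lemma exists_bj_aux {𝕜 X : Type*} [RCLike 𝕜] [NormedAddCommGroup X] [NormedSpace 𝕜 X]
    (x y : X) (hx : x ≠ 0) : ∃ t : 𝕜, ∀ l : 𝕜, ‖(y + t • x) + l • x‖ ≥ ‖y + t • x‖ := by
  have hx' : (0:ℝ) < ‖x‖ := norm_pos_iff.mpr hx
  set R : ℝ := 2 * ‖y‖ / ‖x‖ with hR
  have hR0 : (0:ℝ) ≤ R := by positivity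
  have hf : Continuous fun t : 𝕜 => ‖y + t • x‖ := by continuity
  obtain ⟨t, htmem, hmin⟩ := (isCompact_closedBall (0:𝕜) R).exists_isMinOn
    ⟨0, by simpa using hR0⟩ hf.continuousOn
  have key : ∀ s : 𝕜, ‖y + t • x‖ ≤ ‖y + s • x‖ := by
    intro s
    by_cases hs : s ∈ Metric.closedBall (0:𝕜) R
    · exact hmin hs
    · have h0 : ‖y + t • x‖ ≤ ‖y‖ := by
        have := hmin (Metric.mem_closedBall_self hR0)
        simpa using this
      have hs' : R < ‖s‖ := by
        simpa [Metric.mem_closedBall, dist_zero_right, not_le] using hs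
      have hsx : 2 * ‖y‖ ≤ ‖s • x‖ := by
        rw [norm_smul]
        calc 2 * ‖y‖ = R * ‖x‖ := by rw [hR, div_mul_cancel₀ _ hx'.ne']
        _ ≤ ‖s‖ * ‖x‖ := by nlinarith
      have htri : ‖s • x‖ ≤ ‖y + s • x‖ + ‖y‖ := by
        have := norm_sub_le (y + s • x) y
        simpa using this
      linarith
  refine ⟨t, fun l => ?_⟩
  have : y + t • x + l • x = y + (t + l) • x := by module
  rw [this]
  exact key (t + l)

lemma exists_not_mem_span_pair {𝕜 X : Type*} [RCLike 𝕜] [NormedAddCommGroup X]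
    [NormedSpace 𝕜 X] (hdim : (3 : Cardinal) ≤ Module.rank 𝕜 X) (a b : X) :
    ∃ y, y ∉ Submodule.span 𝕜 {a, b} := by
  by_contra h
  push_neg at h
  have htop : Submodule.span 𝕜 ({a, b} : Set X) = ⊤ := Submodule.eq_top_iff'.mpr h
  have h2 : Module.rank 𝕜 X ≤ 2 := by
    have h3 := rank_span_le (R := 𝕜) (s := ({a, b} : Set X))
    rw [htop, rank_top] at h3
    refine h3.trans ?_
    refine (Cardinal.mk_insert_le).trans ?_
    simp only [Cardinal.mk_fintype, Fintype.card_unique, Nat.cast_one]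
    norm_num
  have : (3 : Cardinal) ≤ 2 := hdim.trans h2
  norm_num at this

theorem stmt_19 {𝕜 X : Type*} [RCLike 𝕜] [NormedAddCommGroup X] [NormedSpace 𝕜 X]
    (hdim : (3 : Cardinal) ≤ Module.rank 𝕜 X) {x : X} (hx : x ≠ 0) :
    ∃ Y : Set X, Y.Infinite ∧
      (∀ y ∈ Y, y ≠ 0 ∧ ∀ l : 𝕜, ‖y + l • x‖ ≥ ‖y‖) ∧
      (∀ y ∈ Y, ∀ y' ∈ Y, y ≠ y' → ¬ ∃ c : 𝕜, y' = c • y) := by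
  obtain ⟨y₁, hy₁'⟩ := exists_not_mem_span_pair hdim x x
  have hy₁ : y₁ ∉ Submodule.span 𝕜 ({x} : Set X) := by
    simpa [Set.pair_eq_singleton] using hy₁'
  obtain ⟨y₂, hy₂⟩ := exists_not_mem_span_pair hdim x y₁
  choose t ht using fun c : 𝕜 => exists_bj_aux (𝕜 := 𝕜) x (y₁ + c • y₂) hx
  set z : 𝕜 → X := fun c => (y₁ + c • y₂) + t c • x with hz
  have hxmem : x ∈ Submodule.span 𝕜 ({x, y₁} : Set X) :=
    Submodule.subset_span (by simp)
  have hy₁mem : y₁ ∈ Submodule.span 𝕜 ({x, y₁} : Set X) :=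
    Submodule.subset_span (by simp)
  have key : ∀ c c' a : 𝕜, z c' = a • z c → a = 1 ∧ c' = c := by
    intro c c' a h
    have heq : (c' - a * c) • y₂ = (a - 1) • y₁ + (a * t c - t c') • x := by
      have h' : (y₁ + c' • y₂) + t c' • x = a • ((y₁ + c • y₂) + t c • x) := h
      linear_combination (norm := module) h'
    have hc : c' = a * c := by
      by_contra hne
      apply hy₂
      have h2 : y₂ = (c' - a * c)⁻¹ • ((a - 1) • y₁ + (a * t c - t c') • x) := by
        rw [← heq, smul_smul, inv_mul_cancel₀ (sub_ne_zero.mpr hne), one_smul]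
      rw [h2]
      exact Submodule.smul_mem _ _ (Submodule.add_mem _
        (Submodule.smul_mem _ _ hy₁mem) (Submodule.smul_mem _ _ hxmem))
    have heq2 : (a - 1) • y₁ = (t c' - a * t c) • x := by
      rw [hc] at heq ⊢
      linear_combination (norm := module) -heq
    have ha : a = 1 := by
      by_contra hne
      apply hy₁
      have h2 : y₁ = (a - 1)⁻¹ • ((t c' - a * t c) • x) := by
        rw [← heq2, smul_smul, inv_mul_cancel₀ (sub_ne_zero.mpr hne), one_smul]
      rw [h2]
      exact Submodule.smul_mem _ _ (Submodule.smul_mem _ _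
        (Submodule.subset_span rfl))
    refine ⟨ha, by rw [hc, ha, one_mul]⟩
  have hne0 : ∀ c, z c ≠ 0 := by
    intro c h0'
    have h0 : y₁ + c • y₂ + t c • x = 0 := h0'
    by_cases hc : c = 0
    · apply hy₁
      have : y₁ = (-(t c)) • x := by
        rw [hc] at h0 ⊢
        simp only [zero_smul, add_zero] at h0
        linear_combination (norm := module) h0
      rw [this]
      exact Submodule.smul_mem _ _ (Submodule.subset_span rfl)
    · apply hy₂
      have : y₂ = c⁻¹ • ((-1 : 𝕜) • y₁ + (-(t c)) • x) := by
        rw [smul_add, smul_smul, smul_smul]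
        have h1 : c • y₂ = (-1 : 𝕜) • y₁ + (-(t c)) • x := by
          linear_combination (norm := module) h0
        calc y₂ = c⁻¹ • (c • y₂) := by rw [smul_smul, inv_mul_cancel₀ hc, one_smul]
        _ = _ := by rw [h1, smul_add, smul_smul, smul_smul]
      rw [this]
      exact Submodule.smul_mem _ _ (Submodule.add_mem _
        (Submodule.smul_mem _ _ hy₁mem) (Submodule.smul_mem _ _ hxmem))
  have hinj : Function.Injective z := by
    intro c c' h
    exact ((key c c' 1 (by rw [one_smul, h])).2).symm
  refine ⟨Set.range z, Set.infinite_range_of_injective hinj, ?_, ?_⟩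
  · rintro y ⟨c, rfl⟩
    exact ⟨hne0 c, fun l => ht c l⟩
  · rintro y ⟨c, rfl⟩ y' ⟨c', rfl⟩ hne ⟨a, ha⟩
    obtain ⟨-, hcc⟩ := key c c' a ha
    exact hne (by rw [hcc])
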